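/- arXiv:2004.02476 — 3 statements merged into one kernel-verified Lean document; each statement's English description precedes it below -/
import Mathlib

section
/- Let J ⊆ {1,…,n} be a nonempty index set and let x ∈ R^n. If x' = x + I_J A_J†(b − Ax), then ‖x' − x⋆‖²_{AᵀA} = ‖x − x⋆‖²_{AᵀA} − ‖(A_J†)ᵀ A_Jᵀ A(x − x⋆)‖₂². -/
noncomputable section
open Matrix

/-- Squared Euclidean norm `‖v‖₂²` of a vector. -/
def norm2 {ι : Type*} [Fintype ι] (v : ι → ℝ) : ℝ := ∑ i, (v i) ^ 2

/-- Squared Frobenius norm `‖A‖_F²` of a matrix. -/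
def frob2 {ι κ : Type*} [Fintype ι] [Fintype κ] (A : Matrix ι κ ℝ) : ℝ :=
  ∑ i, ∑ j, (A i j) ^ 2

/-- Squared largest singular value `σ_max(B)²`, i.e. the largest eigenvalue of `Bᵀ * B`. -/
def sigmaMaxSq {ι κ : Type*} [Fintype ι] [Fintype κ] [DecidableEq κ]
    (B : Matrix ι κ ℝ) : ℝ :=
  sSup (Set.range (Matrix.isHermitian_conjTranspose_mul_self B).eigenvalues)

/-- Squared smallest singular value `σ_min(B)²`, i.e. the smallest eigenvalue of `Bᵀ * B`. -/
def sigmaMinSq {ι κ : Type*} [Fintype ι] [Fintype κ] [DecidableEq κ]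
    (B : Matrix ι κ ℝ) : ℝ :=
  sInf (Set.range (Matrix.isHermitian_conjTranspose_mul_self B).eigenvalues)

/-- Squared Euclidean norm `‖A_(j)‖₂²` of the `j`-th column of `A`. -/
def col2 {m n : ℕ} (A : Matrix (Fin m) (Fin n) ℝ) (j : Fin n) : ℝ := ∑ i, (A i j) ^ 2

/-- `A` has full column rank: its columns are linearly independent. -/
def FullColRank {m n : ℕ} (A : Matrix (Fin m) (Fin n) ℝ) : Prop :=
  LinearIndependent ℝ fun j : Fin n => (fun i => A i j : Fin m → ℝ)

/-- `max_{1 ≤ j ≤ n} |A_(j)ᵀ r|² / ‖A_(j)‖₂²`. -/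
def maxRatio {m n : ℕ} (A : Matrix (Fin m) (Fin n) ℝ) (r : Fin m → ℝ) : ℝ :=
  ⨆ j : Fin n, ((Aᵀ *ᵥ r) j) ^ 2 / col2 A j

/-- The greedy parameter
`ε = (θ/‖Aᵀr‖₂²)·max_j |A_(j)ᵀ r|²/‖A_(j)‖₂² + (1−θ)/‖A‖_F²`. -/
def eps {m n : ℕ} (A : Matrix (Fin m) (Fin n) ℝ) (r : Fin m → ℝ) (θ : ℝ) : ℝ :=
  θ / norm2 (Aᵀ *ᵥ r) * maxRatio A r + (1 - θ) / frob2 A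

open Classical in
/-- The greedy index set `J = { j : |A_(j)ᵀ r|² ≥ ε ‖Aᵀr‖₂² ‖A_(j)‖₂² }`. -/
def greedySet {m n : ℕ} (A : Matrix (Fin m) (Fin n) ℝ) (r : Fin m → ℝ) (θ : ℝ) :
    Finset (Fin n) :=
  Finset.univ.filter fun j =>
    eps A r θ * norm2 (Aᵀ *ᵥ r) * col2 A j ≤ ((Aᵀ *ᵥ r) j) ^ 2

/-- The column submatrix `A_J` of `A`, with columns indexed by `J`. -/
def subCols {m n : ℕ} (A : Matrix (Fin m) (Fin n) ℝ) (J : Finset (Fin n)) :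
    Matrix (Fin m) {j // j ∈ J} ℝ :=
  A.submatrix id fun j => (j : Fin n)

/-- The submatrix `I_J` of the `n × n` identity with columns indexed by `J`. -/
def subId {n : ℕ} (J : Finset (Fin n)) : Matrix (Fin n) {j // j ∈ J} ℝ :=
  (1 : Matrix (Fin n) (Fin n) ℝ).submatrix id fun j => (j : Fin n)

/-- Moore–Penrose pseudoinverse of a full-column-rank matrix: `B† = (BᵀB)⁻¹Bᵀ`. -/
def pinv {ι κ : Type*} [Fintype ι] [Fintype κ] [DecidableEq κ] (B : Matrix ι κ ℝ) :
    Matrix κ ι ℝ :=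
  (Bᵀ * B)⁻¹ * Bᵀ

/-- The matrix `Ã_J` whose columns are the normalized columns `A_(j)/‖A_(j)‖₂`, `j ∈ J`. -/
def tildeA {m n : ℕ} (A : Matrix (Fin m) (Fin n) ℝ) (J : Finset (Fin n)) :
    Matrix (Fin m) {j // j ∈ J} ℝ :=
  Matrix.of fun i j => A i (j : Fin n) / Real.sqrt (col2 A (j : Fin n))

/-- The matrix `Ĩ_J` whose columns are `e_j/‖A_(j)‖₂`, `j ∈ J`. -/
def tildeI {m n : ℕ} (A : Matrix (Fin m) (Fin n) ℝ) (J : Finset (Fin n)) :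
    Matrix (Fin n) {j // j ∈ J} ℝ :=
  Matrix.of fun i j => (if i = (j : Fin n) then 1 else 0) / Real.sqrt (col2 A (j : Fin n))

/-- exact decrease identity for one block Gauss–Seidel update:
`‖x' − x⋆‖²_{AᵀA} = ‖x − x⋆‖²_{AᵀA} − ‖(A_J†)ᵀ A_Jᵀ A(x − x⋆)‖₂²`. -/
theorem stmt3 {m n : ℕ} (A : Matrix (Fin m) (Fin n) ℝ) (hA : FullColRank A)
    (b : Fin m → ℝ) (xstar : Fin n → ℝ) (hstar : (Aᵀ * A) *ᵥ xstar = Aᵀ *ᵥ b)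
    (J : Finset (Fin n)) (hJ : J.Nonempty) (x x' : Fin n → ℝ)
    (hx' : x' = x + subId J *ᵥ (pinv (subCols A J) *ᵥ (b - A *ᵥ x))) :
    norm2 (A *ᵥ (x' - xstar)) =
      norm2 (A *ᵥ (x - xstar)) -
        norm2 ((pinv (subCols A J))ᵀ *ᵥ ((subCols A J)ᵀ *ᵥ (A *ᵥ (x - xstar)))) := by
  classical
  set B := subCols A J with hB
  set M := Bᵀ * B with hM
  -- columns of B are linearly independent
  have hBli : LinearIndependent ℝ fun j : {j // j ∈ J} => (fun i => B i j : Fin m → ℝ) :=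
    hA.comp Subtype.val Subtype.val_injective
  have hBinj : ∀ v : {j // j ∈ J} → ℝ, B *ᵥ v = 0 → v = 0 := by
    intro v hv
    have := Fintype.linearIndependent_iff.mp hBli v ?_
    · exact funext this
    · funext i
      have := congrFun hv i
      simpa [Finset.sum_apply, mulVec, dotProduct, mul_comm] using this
  have hMu : IsUnit M := by
    have hct : Bᴴ = Bᵀ := by ext i j; simp [conjTranspose_apply]
    rw [← Matrix.mulVec_injective_iff_isUnit]
    intro v w h
    have h0 : (Bᴴ * B) *ᵥ (v - w) = 0 := by
      rw [hct, ← hM, Matrix.mulVec_sub, h, sub_self]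
    rw [Matrix.conjTranspose_mul_self_mulVec_eq_zero] at h0
    exact sub_eq_zero.mp (hBinj _ h0)
  have hMdet : IsUnit M.det := (Matrix.isUnit_iff_isUnit_det M).mp hMu
  have hMinvM : M⁻¹ * M = 1 := Matrix.nonsing_inv_mul M hMdet
  have hMsymm : Mᵀ = M := by rw [hM, Matrix.transpose_mul, Matrix.transpose_transpose]
  have hMinvsymm : (M⁻¹)ᵀ = M⁻¹ := by rw [Matrix.transpose_nonsing_inv, hMsymm]
  set P := B * pinv B with hPdef
  have hP : P = B * M⁻¹ * Bᵀ := by rw [hPdef, pinv, ← hM, Matrix.mul_assoc]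
  have hPsymm : Pᵀ = P := by
    rw [hP, Matrix.transpose_mul, Matrix.transpose_mul, Matrix.transpose_transpose,
      hMinvsymm, Matrix.mul_assoc]
  have hPP : P * P = P := by
    rw [hP]
    calc B * M⁻¹ * Bᵀ * (B * M⁻¹ * Bᵀ)
        = B * M⁻¹ * ((Bᵀ * B) * (M⁻¹ * Bᵀ)) := by simp only [Matrix.mul_assoc]
      _ = B * ((M⁻¹ * M) * (M⁻¹ * Bᵀ)) := by rw [← hM]; simp only [Matrix.mul_assoc]
      _ = B * M⁻¹ * Bᵀ := by rw [hMinvM, Matrix.one_mul, Matrix.mul_assoc]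
  set u := A *ᵥ (x - xstar) with hu
  have hBtop : ∀ (v : Fin m → ℝ) (j : {j // j ∈ J}), (Bᵀ *ᵥ v) j = (Aᵀ *ᵥ v) (j : Fin n) := by
    intro v j
    simp [hB, subCols, mulVec, dotProduct, Matrix.transpose_apply]
  have hAr : Aᵀ *ᵥ (b - A *ᵥ x) = -(Aᵀ *ᵥ u) := by
    rw [Matrix.mulVec_sub, ← hstar, hu]
    simp only [Matrix.mulVec_sub, ← Matrix.mulVec_mulVec]
    abel
  have hBr : Bᵀ *ᵥ (b - A *ᵥ x) = -(Bᵀ *ᵥ u) := by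
    funext j
    simp only [Pi.neg_apply, hBtop, hAr]
  have hAsub : A * subId J = B := by
    ext i j
    simp only [Matrix.mul_apply, subId, Matrix.submatrix_apply, id_def, hB, subCols,
      Matrix.one_apply]
    rw [Finset.sum_eq_single (j : Fin n)] <;> simp +contextual
  have hPr : P *ᵥ (b - A *ᵥ x) = -(P *ᵥ u) := by
    rw [hP, ← Matrix.mulVec_mulVec, hBr, Matrix.mulVec_neg, Matrix.mulVec_mulVec]
  have hkey : A *ᵥ (x' - xstar) = u - P *ᵥ u := by
    have hxx : x' - xstar = (x - xstar) + subId J *ᵥ (pinv B *ᵥ (b - A *ᵥ x)) := by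
      rw [hx']; abel
    rw [hxx, Matrix.mulVec_add, ← hu, Matrix.mulVec_mulVec, hAsub, Matrix.mulVec_mulVec,
      ← hPdef, hPr]
    abel
  have hrhs : (pinv B)ᵀ *ᵥ (Bᵀ *ᵥ u) = P *ᵥ u := by
    rw [Matrix.mulVec_mulVec, ← Matrix.transpose_mul, hPsymm]
  rw [hkey, hrhs]
  have hdot : ∀ v : Fin m → ℝ, norm2 v = v ⬝ᵥ v := by
    intro v; simp [norm2, dotProduct, sq]
  have hPuPu : (P *ᵥ u) ⬝ᵥ (P *ᵥ u) = (P *ᵥ u) ⬝ᵥ u := by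
    rw [Matrix.dotProduct_mulVec]
    congr 1
    rw [← Matrix.mulVec_transpose, hPsymm, Matrix.mulVec_mulVec, hPP]
  rw [hdot, hdot, hdot, sub_dotProduct, dotProduct_sub, dotProduct_sub,
    hPuPu, dotProduct_comm (P *ᵥ u) u]
  ring
end
end

section
/- (Uniform estimate (6) of Theorem 3.1 for the GBGS method.) Let {x_k} be the iterates of the GBGS method with parameter θ ∈ [0,1]: for each k ≥ 0, Aᵀ(b − A x_k) ≠ 0, J_k is the greedy index set determined by θ and r_k = b − A x_k (each J_k a proper subset of {1,…,n}), and x_{k+1} = x_k + I_{J_k} A_{J_k}† (b − A x_k). Let α, β, γ > 0 be such that σ_max(A_{J_k})² ≤ α, ‖A_{J_k}‖_F² ≥ β, and ‖A‖_F² − ‖A_{J_k}‖_F² ≤ γ for all k. Then for all k ≥ 1, ‖x_k − x⋆‖²_{AᵀA} ≤ (1 − (β/α)·(θ·‖A‖_F²/γ + (1−θ))·σ_min(A)²/‖A‖_F²)^{k−1} · (1 − (‖A_{J₀}‖_F²/σ_max(A_{J₀})²)·σ_min(A)²/‖A‖_F²) · ‖x₀ − x⋆‖²_{AᵀA}. 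-/
noncomputable section
open Matrix

section helpers

lemma norm2_eq_dot {ι : Type*} [Fintype ι] (v : ι → ℝ) : norm2 v = v ⬝ᵥ v := by
  simp [norm2, dotProduct, sq]

lemma norm2_nonneg' {ι : Type*} [Fintype ι] (v : ι → ℝ) : 0 ≤ norm2 v :=
  Finset.sum_nonneg fun i _ => sq_nonneg _

lemma norm2_eq_zero' {ι : Type*} [Fintype ι] {v : ι → ℝ} (h : norm2 v = 0) : v = 0 := by
  funext j
  have := (Finset.sum_eq_zero_iff_of_nonneg (fun i _ => sq_nonneg (v i))).mp h j (Finset.mem_univ j)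
  exact pow_eq_zero_iff (by norm_num) |>.mp this

lemma norm2_pos' {ι : Type*} [Fintype ι] {v : ι → ℝ} (h : v ≠ 0) : 0 < norm2 v := by
  rcases lt_or_eq_of_le (norm2_nonneg' v) with h1 | h1
  · exact h1
  · exact absurd (norm2_eq_zero' h1.symm) h

lemma star_eq_transpose' {ι κ : Type*} [Fintype ι] [Fintype κ] (M : Matrix ι κ ℝ) :
    Mᴴ = Mᵀ := by
  ext i j; simp [Matrix.conjTranspose_apply]

lemma dot_mulVec_left {p q : Type*} [Fintype p] [Fintype q] (M : Matrix p q ℝ)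
    (a : q → ℝ) (b : p → ℝ) : (M *ᵥ a) ⬝ᵥ b = a ⬝ᵥ (Mᵀ *ᵥ b) := by
  rw [dotProduct_comm, dotProduct_mulVec, ← Matrix.transpose_transpose M, vecMul_transpose,
    Matrix.transpose_transpose, dotProduct_comm]

section spec
variable {ι N : Type*} [Fintype ι] [Fintype N] [DecidableEq N] (B : Matrix ι N ℝ)

/-- eigenvector unitary of `Bᵀ * B`. -/
def evU : Matrix N N ℝ :=
  ((Matrix.isHermitian_conjTranspose_mul_self B).eigenvectorUnitary : Matrix N N ℝ)

/-- eigenvalues of `Bᵀ * B`. -/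
def eigv : N → ℝ := (Matrix.isHermitian_conjTranspose_mul_self B).eigenvalues

lemma evU_mul_star : evU B * star (evU B) = 1 :=
  (Matrix.mem_unitaryGroup_iff).mp ((Matrix.isHermitian_conjTranspose_mul_self B).eigenvectorUnitary).2

lemma star_mul_evU : star (evU B) * evU B = 1 :=
  (Matrix.mem_unitaryGroup_iff').mp ((Matrix.isHermitian_conjTranspose_mul_self B).eigenvectorUnitary).2

lemma coords_spec : Bᵀ * B = evU B * Matrix.diagonal (eigv B) * star (evU B) := by
  have h := (Matrix.isHermitian_conjTranspose_mul_self B).spectral_theorem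
  have h2 : (RCLike.ofReal ∘ (Matrix.isHermitian_conjTranspose_mul_self B).eigenvalues : N → ℝ)
      = eigv B := funext fun i => rfl
  rw [h2] at h
  exact h

lemma transpose_evU : (evU B)ᵀ = star (evU B) := by
  rw [← star_eq_transpose']; rfl

/-- coordinates of `v` in the eigenbasis. -/
def coords (v : N → ℝ) : N → ℝ := star (evU B) *ᵥ v

lemma dot_evU_mulVec (v w : N → ℝ) : v ⬝ᵥ (evU B *ᵥ w) = coords B v ⬝ᵥ w := by
  rw [dotProduct_comm, dot_mulVec_left, transpose_evU, dotProduct_comm]; rfl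

lemma norm2_eq_sum_coords (v : N → ℝ) : norm2 v = ∑ i, coords B v i ^ 2 := by
  have h1 : evU B *ᵥ coords B v = v := by
    show evU B *ᵥ (star (evU B) *ᵥ v) = v
    rw [mulVec_mulVec, evU_mul_star, one_mulVec]
  calc norm2 v = v ⬝ᵥ v := norm2_eq_dot v
    _ = v ⬝ᵥ (evU B *ᵥ coords B v) := by rw [h1]
    _ = coords B v ⬝ᵥ coords B v := dot_evU_mulVec B v _
    _ = ∑ i, coords B v i ^ 2 := (norm2_eq_dot _).symm

lemma quad_eq_sum (v : N → ℝ) :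
    v ⬝ᵥ ((Bᵀ * B) *ᵥ v) = ∑ i, eigv B i * coords B v i ^ 2 := by
  conv_lhs => rw [coords_spec B]
  rw [← mulVec_mulVec, ← mulVec_mulVec, dot_evU_mulVec]
  show coords B v ⬝ᵥ (Matrix.diagonal (eigv B) *ᵥ coords B v) = _
  simp only [dotProduct, Matrix.mulVec_diagonal]
  exact Finset.sum_congr rfl fun i _ => by ring

lemma norm2_G_mulVec_eq (v : N → ℝ) :
    norm2 ((Bᵀ * B) *ᵥ v) = ∑ i, eigv B i ^ 2 * coords B v i ^ 2 := by
  have hsU : ∀ w : N → ℝ, norm2 (evU B *ᵥ w) = norm2 w := by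
    intro w
    rw [norm2_eq_dot, dot_mulVec_left, transpose_evU, mulVec_mulVec,
      star_mul_evU, one_mulVec, ← norm2_eq_dot]
  conv_lhs => rw [coords_spec B, ← mulVec_mulVec, ← mulVec_mulVec]
  rw [hsU]
  show norm2 (Matrix.diagonal (eigv B) *ᵥ coords B v) = _
  simp [norm2, Matrix.mulVec_diagonal, mul_pow]

lemma eig_nonneg (i : N) : 0 ≤ eigv B i := by
  have hP : (Bᵀ * B).PosSemidef := by
    have := Matrix.posSemidef_conjTranspose_mul_self B
    rwa [star_eq_transpose'] at this
  exact hP.eigenvalues_nonneg i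

lemma sigmaMin_le_eig (i : N) : sigmaMinSq B ≤ eigv B i :=
  csInf_le (Set.Finite.bddBelow (Set.finite_range _)) ⟨i, rfl⟩

lemma eig_le_sigmaMax (i : N) : eigv B i ≤ sigmaMaxSq B :=
  le_csSup (Set.Finite.bddAbove (Set.finite_range _)) ⟨i, rfl⟩

lemma sigmaMinSq_nonneg [Nonempty N] : 0 ≤ sigmaMinSq B :=
  Real.sInf_nonneg (by rintro x ⟨j, rfl⟩; exact eig_nonneg B j)

lemma quad_le_sigmaMax (v : N → ℝ) :
    v ⬝ᵥ ((Bᵀ * B) *ᵥ v) ≤ sigmaMaxSq B * norm2 v := by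
  rw [quad_eq_sum, norm2_eq_sum_coords B v, Finset.mul_sum]
  exact Finset.sum_le_sum fun i _ =>
    mul_le_mul_of_nonneg_right (eig_le_sigmaMax B i) (sq_nonneg _)

lemma sigmaMin_quad_le_norm2_G (v : N → ℝ) :
    sigmaMinSq B * (v ⬝ᵥ ((Bᵀ * B) *ᵥ v)) ≤ norm2 ((Bᵀ * B) *ᵥ v) := by
  rw [quad_eq_sum, norm2_G_mulVec_eq, Finset.mul_sum]
  refine Finset.sum_le_sum fun i _ => ?_
  have h1 : sigmaMinSq B * eigv B i ≤ eigv B i * eigv B i :=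
    mul_le_mul_of_nonneg_right (sigmaMin_le_eig B i) (eig_nonneg B i)
  calc sigmaMinSq B * (eigv B i * coords B v i ^ 2)
      = (sigmaMinSq B * eigv B i) * coords B v i ^ 2 := by ring
    _ ≤ (eigv B i * eigv B i) * coords B v i ^ 2 :=
        mul_le_mul_of_nonneg_right h1 (sq_nonneg _)
    _ = eigv B i ^ 2 * coords B v i ^ 2 := by ring

lemma norm2_le_sigmaMax_invQuad (hdet : IsUnit (Bᵀ * B).det) (q : N → ℝ) :
    norm2 q ≤ sigmaMaxSq B * (q ⬝ᵥ ((Bᵀ * B)⁻¹ *ᵥ q)) := by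
  obtain ⟨u, rfl⟩ : ∃ u, (Bᵀ * B) *ᵥ u = q :=
    ⟨(Bᵀ * B)⁻¹ *ᵥ q, by rw [mulVec_mulVec, Matrix.mul_nonsing_inv _ hdet, one_mulVec]⟩
  have h2 : ((Bᵀ * B) *ᵥ u) ⬝ᵥ ((Bᵀ * B)⁻¹ *ᵥ ((Bᵀ * B) *ᵥ u)) = u ⬝ᵥ ((Bᵀ * B) *ᵥ u) := by
    rw [mulVec_mulVec (M := (Bᵀ * B)⁻¹), Matrix.nonsing_inv_mul _ hdet, one_mulVec,
      dot_mulVec_left, Matrix.transpose_mul, Matrix.transpose_transpose]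
  rw [h2, norm2_G_mulVec_eq, quad_eq_sum, Finset.mul_sum]
  refine Finset.sum_le_sum fun i _ => ?_
  have h1 : eigv B i * eigv B i ≤ sigmaMaxSq B * eigv B i :=
    mul_le_mul_of_nonneg_right (eig_le_sigmaMax B i) (eig_nonneg B i)
  calc eigv B i ^ 2 * coords B u i ^ 2 = (eigv B i * eigv B i) * coords B u i ^ 2 := by ring
    _ ≤ (sigmaMaxSq B * eigv B i) * coords B u i ^ 2 :=
        mul_le_mul_of_nonneg_right h1 (sq_nonneg _)
    _ = sigmaMaxSq B * (eigv B i * coords B u i ^ 2) := by ring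



end spec
lemma dot_G {ι N : Type*} [Fintype ι] [Fintype N] (B : Matrix ι N ℝ) (v : N → ℝ) :
    v ⬝ᵥ ((Bᵀ * B) *ᵥ v) = norm2 (B *ᵥ v) := by
  rw [← Matrix.mulVec_mulVec, Matrix.dotProduct_mulVec, Matrix.vecMul_transpose, ← norm2_eq_dot]
section mx
variable {m n : ℕ} (A : Matrix (Fin m) (Fin n) ℝ) (J : Finset (Fin n))

lemma subCols_transpose_mulVec (v : Fin m → ℝ) (j : {j // j ∈ J}) :
    ((subCols A J)ᵀ *ᵥ v) j = (Aᵀ *ᵥ v) (j : Fin n) := rfl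

lemma mul_subId : A * subId J = subCols A J := by
  ext i j
  simp [subId, subCols, Matrix.mul_apply, Matrix.one_apply]

lemma mulVec_subId (y : {j // j ∈ J} → ℝ) : A *ᵥ (subId J *ᵥ y) = subCols A J *ᵥ y := by
  rw [Matrix.mulVec_mulVec, mul_subId]

lemma frob2_eq_sum_col2 : frob2 A = ∑ j, col2 A j := Finset.sum_comm

lemma frob2_subCols : frob2 (subCols A J) = ∑ j ∈ J, col2 A j := by
  rw [frob2, Finset.sum_comm, ← Finset.sum_coe_sort J (fun j => col2 A j)]
  rfl

lemma sum_compl_col2 : ∑ j ∈ Jᶜ, col2 A j = frob2 A - frob2 (subCols A J) := by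
  rw [frob2_eq_sum_col2, frob2_subCols, eq_sub_iff_add_eq, Finset.sum_compl_add_sum]

lemma col2_pos (hA : FullColRank A) (j : Fin n) : 0 < col2 A j :=
  norm2_pos' (hA.ne_zero j)

lemma fullrank_sub (hA : FullColRank A) {v : {j // j ∈ J} → ℝ}
    (hv : subCols A J *ᵥ v = 0) : v = 0 := by
  have h := hA.comp (Subtype.val : {j // j ∈ J} → Fin n) Subtype.val_injective
  rw [Fintype.linearIndependent_iff] at h
  have hs : (∑ jj : {j // j ∈ J}, v jj • (fun i => A i (jj : Fin n) : Fin m → ℝ)) = 0 := by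
    have h2 : (∑ jj : {j // j ∈ J}, v jj • (fun i => A i (jj : Fin n) : Fin m → ℝ))
        = subCols A J *ᵥ v := by
      funext i
      simp [Matrix.mulVec, dotProduct, subCols, mul_comm, Finset.sum_apply]
    rw [h2, hv]
  funext j
  exact h v hs j

lemma det_unit (hA : FullColRank A) : IsUnit ((subCols A J)ᵀ * subCols A J).det := by
  have hpd : ((subCols A J)ᵀ * subCols A J).PosDef := by
    refine Matrix.PosDef.of_dotProduct_mulVec_pos (Matrix.isHermitian_conjTranspose_mul_self _) fun v hv => ?_
    have h1 : star v = v := by funext i; simp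
    rw [h1, dot_G]
    exact norm2_pos' fun hz => hv (fullrank_sub A J hA hz)
  exact isUnit_iff_ne_zero.mpr (ne_of_gt hpd.det_pos)

end mx
end helpers
section step
variable {m n : ℕ}

lemma energy_update {S : Type*} [Fintype S] [DecidableEq S]
    (B : Matrix (Fin m) S ℝ) (hdet : IsUnit (Bᵀ * B).det) (w : Fin m → ℝ) :
    norm2 (w - B *ᵥ ((Bᵀ * B)⁻¹ *ᵥ (Bᵀ *ᵥ w)))
      = norm2 w - (Bᵀ *ᵥ w) ⬝ᵥ ((Bᵀ * B)⁻¹ *ᵥ (Bᵀ *ᵥ w)) := by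
  set q := Bᵀ *ᵥ w with hq
  set t := (Bᵀ * B)⁻¹ *ᵥ q with ht
  have hGt : (Bᵀ * B) *ᵥ t = q := by
    rw [ht, Matrix.mulVec_mulVec, Matrix.mul_nonsing_inv _ hdet, Matrix.one_mulVec]
  have hpp : (B *ᵥ t) ⬝ᵥ (B *ᵥ t) = q ⬝ᵥ t := by
    rw [dot_mulVec_left, Matrix.mulVec_mulVec, hGt]
    exact dotProduct_comm t q
  have hwp : w ⬝ᵥ (B *ᵥ t) = q ⬝ᵥ t := by
    rw [Matrix.dotProduct_mulVec, ← Matrix.transpose_transpose B, Matrix.vecMul_transpose, ← hq]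
  have key : (w - B *ᵥ t) ⬝ᵥ (w - B *ᵥ t) = w ⬝ᵥ w - q ⬝ᵥ t := by
    rw [sub_dotProduct, dotProduct_sub, dotProduct_sub, hpp, hwp,
      dotProduct_comm (B *ᵥ t) w, hwp]
    ring
  rw [norm2_eq_dot, key, ← norm2_eq_dot]

variable (A : Matrix (Fin m) (Fin n) ℝ) (b : Fin m → ℝ) (xstar : Fin n → ℝ)

lemma res_star (hstar : (Aᵀ * A) *ᵥ xstar = Aᵀ *ᵥ b) : Aᵀ *ᵥ (b - A *ᵥ xstar) = 0 := by
  have h : Aᵀ *ᵥ (A *ᵥ xstar) = Aᵀ *ᵥ b := by rw [Matrix.mulVec_mulVec, hstar]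
  rw [Matrix.mulVec_sub, h, sub_self]

lemma res_decomp (x : Fin n → ℝ) :
    b - A *ᵥ x = (b - A *ᵥ xstar) - A *ᵥ (x - xstar) := by
  rw [Matrix.mulVec_sub]; abel

lemma Bt_star (hstar : (Aᵀ * A) *ᵥ xstar = Aᵀ *ᵥ b) (J : Finset (Fin n)) :
    (subCols A J)ᵀ *ᵥ (b - A *ᵥ xstar) = 0 := by
  funext j
  rw [subCols_transpose_mulVec, res_star A b xstar hstar]
  rfl

lemma Bt_res (hstar : (Aᵀ * A) *ᵥ xstar = Aᵀ *ᵥ b) (J : Finset (Fin n)) (x : Fin n → ℝ) :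
    (subCols A J)ᵀ *ᵥ (b - A *ᵥ x)
      = - ((subCols A J)ᵀ *ᵥ (A *ᵥ (x - xstar))) := by
  rw [res_decomp A b xstar x, Matrix.mulVec_sub, Bt_star A b xstar hstar, zero_sub]

/-- The energy error after one exact block update. -/
lemma energy_step (hA : FullColRank A) (hstar : (Aᵀ * A) *ᵥ xstar = Aᵀ *ᵥ b)
    (J : Finset (Fin n)) (x : Fin n → ℝ) :
    norm2 (A *ᵥ ((x + subId J *ᵥ (pinv (subCols A J) *ᵥ (b - A *ᵥ x))) - xstar))
      = norm2 (A *ᵥ (x - xstar))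
        - ((subCols A J)ᵀ *ᵥ (A *ᵥ (x - xstar))) ⬝ᵥ
            (((subCols A J)ᵀ * subCols A J)⁻¹ *ᵥ ((subCols A J)ᵀ *ᵥ (A *ᵥ (x - xstar)))) := by
  set B := subCols A J with hB
  set w := A *ᵥ (x - xstar) with hw
  have hz : subId J *ᵥ (pinv B *ᵥ (b - A *ᵥ x))
      = subId J *ᵥ (- ((Bᵀ * B)⁻¹ *ᵥ (Bᵀ *ᵥ w))) := by
    congr 1
    rw [pinv, ← Matrix.mulVec_mulVec, Bt_res A b xstar hstar J x, Matrix.mulVec_neg]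
  have harg : (x + subId J *ᵥ (pinv B *ᵥ (b - A *ᵥ x))) - xstar
      = (x - xstar) + subId J *ᵥ (- ((Bᵀ * B)⁻¹ *ᵥ (Bᵀ *ᵥ w))) := by
    rw [hz]; abel
  rw [harg, Matrix.mulVec_add, mulVec_subId, Matrix.mulVec_neg, ← hw, ← hB]
  have : w + -(B *ᵥ ((Bᵀ * B)⁻¹ *ᵥ (Bᵀ *ᵥ w))) = w - B *ᵥ ((Bᵀ * B)⁻¹ *ᵥ (Bᵀ *ᵥ w)) := by abel
  rw [this, energy_update B (det_unit A J hA) w]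

/-- After an exact block update, the new residual is orthogonal to the block columns. -/
lemma res_orth (hA : FullColRank A) (J : Finset (Fin n)) (x : Fin n → ℝ) :
    ∀ j ∈ J, (Aᵀ *ᵥ (b - A *ᵥ (x + subId J *ᵥ (pinv (subCols A J) *ᵥ (b - A *ᵥ x))))) j = 0 := by
  intro j hj
  set B := subCols A J with hB
  set r := b - A *ᵥ x with hr
  have hnew : b - A *ᵥ (x + subId J *ᵥ (pinv B *ᵥ r))
      = r - B *ᵥ ((Bᵀ * B)⁻¹ *ᵥ (Bᵀ *ᵥ r)) := by
    rw [Matrix.mulVec_add, mulVec_subId, pinv, ← Matrix.mulVec_mulVec, ← hB]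
    rw [hr]; abel
  have hBt : Bᵀ *ᵥ (b - A *ᵥ (x + subId J *ᵥ (pinv B *ᵥ r))) = 0 := by
    rw [hnew, Matrix.mulVec_sub, Matrix.mulVec_mulVec, Matrix.mulVec_mulVec,
      Matrix.mul_nonsing_inv _ (det_unit A J hA), Matrix.one_mulVec, sub_self]
  have := congrFun hBt ⟨j, hj⟩
  rwa [subCols_transpose_mulVec] at this

end step
section greedy
variable {m n : ℕ} (A : Matrix (Fin m) (Fin n) ℝ)

lemma norm2_neg {ι : Type*} [Fintype ι] (v : ι → ℝ) : norm2 (-v) = norm2 v := by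
  simp [norm2]

lemma sq_le_maxRatio_col2 (hA : FullColRank A) (r : Fin m → ℝ) (j : Fin n) :
    ((Aᵀ *ᵥ r) j) ^ 2 ≤ maxRatio A r * col2 A j := by
  have h : ((Aᵀ *ᵥ r) j) ^ 2 / col2 A j ≤ maxRatio A r := by
    rw [maxRatio]
    exact le_ciSup (f := fun j => ((Aᵀ *ᵥ r) j) ^ 2 / col2 A j)
      (Set.Finite.bddAbove (Set.finite_range _)) j
  have hcp := col2_pos A hA j
  calc ((Aᵀ *ᵥ r) j) ^ 2 = ((Aᵀ *ᵥ r) j) ^ 2 / col2 A j * col2 A j := by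
        field_simp
    _ ≤ maxRatio A r * col2 A j := mul_le_mul_of_nonneg_right h hcp.le

lemma norm2_le_maxRatio_frob (hA : FullColRank A) (r : Fin m → ℝ) :
    norm2 (Aᵀ *ᵥ r) ≤ maxRatio A r * frob2 A := by
  rw [frob2_eq_sum_col2, Finset.mul_sum]
  exact Finset.sum_le_sum fun j _ => sq_le_maxRatio_col2 A hA r j

lemma norm2_le_maxRatio_compl (hA : FullColRank A) (r : Fin m → ℝ) (J : Finset (Fin n))
    (hzero : ∀ j ∈ J, (Aᵀ *ᵥ r) j = 0) :
    norm2 (Aᵀ *ᵥ r) ≤ maxRatio A r * (frob2 A - frob2 (subCols A J)) := by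
  rw [← sum_compl_col2, Finset.mul_sum, norm2,
    ← Finset.sum_compl_add_sum J (fun j => ((Aᵀ *ᵥ r) j) ^ 2)]
  have h2 : ∑ j ∈ J, ((Aᵀ *ᵥ r) j) ^ 2 = 0 :=
    Finset.sum_eq_zero fun j hj => by rw [hzero j hj]; ring
  rw [h2, add_zero]
  exact Finset.sum_le_sum fun j _ => sq_le_maxRatio_col2 A hA r j

lemma greedy_sum (r : Fin m → ℝ) (θ : ℝ) :
    eps A r θ * norm2 (Aᵀ *ᵥ r) * frob2 (subCols A (greedySet A r θ))
      ≤ ∑ j ∈ greedySet A r θ, ((Aᵀ *ᵥ r) j) ^ 2 := by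
  rw [frob2_subCols, Finset.mul_sum]
  refine Finset.sum_le_sum fun j hj => ?_
  simp only [greedySet, Finset.mem_filter] at hj
  exact hj.2

lemma norm2_sub_mulVec {S : Type*} [Fintype S] (B : Matrix (Fin m) S ℝ) (v : Fin m → ℝ) :
    norm2 (Bᵀ *ᵥ v) = ∑ j, ((Bᵀ *ᵥ v) j) ^ 2 := rfl

lemma arith (E D N eN frob smax smin F α β c : ℝ)
    (h1 : eN * frob ≤ smax * D) (h2 : c * N ≤ eN * F) (h3 : smin * E ≤ N)
    (hc : 0 ≤ c) (hs : 0 < smax) (hsα : smax ≤ α) (hb : 0 < β) (hbf : β ≤ frob)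
    (hF : 0 < F) (hsmin : 0 ≤ smin) (hE : 0 ≤ E) (hN : 0 ≤ N) (heN : 0 ≤ eN) :
    β / α * c * (smin / F) * E ≤ D := by
  have hα : 0 < α := lt_of_lt_of_le hs hsα
  have hef : 0 ≤ eN * frob := mul_nonneg heN (hb.le.trans hbf)
  have hD : 0 ≤ D := by nlinarith [hef, h1, hs]
  have key : β * c * (smin * E) ≤ D * (α * F) := by
    have s1 : c * (smin * E) ≤ c * N := by nlinarith
    have s2 : c * (smin * E) ≤ eN * F := le_trans s1 h2
    have s3 : β * (c * (smin * E)) ≤ β * (eN * F) :=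
      mul_le_mul_of_nonneg_left s2 (le_of_lt hb)
    have s4 : β * (eN * F) ≤ frob * (eN * F) :=
      mul_le_mul_of_nonneg_right hbf (mul_nonneg heN hF.le)
    have s5 : frob * (eN * F) = (eN * frob) * F := by ring
    have s6 : (eN * frob) * F ≤ (smax * D) * F :=
      mul_le_mul_of_nonneg_right h1 (le_of_lt hF)
    have s7 : (smax * D) * F ≤ (α * D) * F :=
      mul_le_mul_of_nonneg_right (mul_le_mul_of_nonneg_right hsα hD) hF.le
    nlinarith [s3, s4, s6, s7]
  have heq : β / α * c * (smin / F) * E = β * c * (smin * E) / (α * F) := by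
    field_simp
  rw [heq, div_le_iff₀ (mul_pos hα hF)]
  linarith [key]

end greedy
/-- uniform estimate (6) of Theorem 3.1, GBGS method: for the GBGS
iterates `x_k` with uniform bounds `σ_max(A_{J_k})² ≤ α`, `‖A_{J_k}‖_F² ≥ β`,
`‖A‖_F² − ‖A_{J_k}‖_F² ≤ γ`, one has for all `k ≥ 1`
`‖x_k − x⋆‖²_{AᵀA} ≤ (1 − (β/α)(θ‖A‖_F²/γ + (1−θ))σ_min(A)²/‖A‖_F²)^{k−1}
  (1 − (‖A_{J₀}‖_F²/σ_max(A_{J₀})²)σ_min(A)²/‖A‖_F²) ‖x₀ − x⋆‖²_{AᵀA}`. -/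
theorem stmt9 {m n : ℕ} (A : Matrix (Fin m) (Fin n) ℝ) (hA : FullColRank A)
    (b : Fin m → ℝ) (xstar : Fin n → ℝ) (hstar : (Aᵀ * A) *ᵥ xstar = Aᵀ *ᵥ b)
    (θ : ℝ) (hθ : θ ∈ Set.Icc (0 : ℝ) 1)
    (x : ℕ → Fin n → ℝ)
    (hres : ∀ k : ℕ, Aᵀ *ᵥ (b - A *ᵥ x k) ≠ 0)
    (J : ℕ → Finset (Fin n)) (hJ : ∀ k : ℕ, J k = greedySet A (b - A *ᵥ x k) θ)
    (hproper : ∀ k : ℕ, J k ≠ Finset.univ)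
    (hiter : ∀ k : ℕ,
      x (k + 1) = x k + subId (J k) *ᵥ (pinv (subCols A (J k)) *ᵥ (b - A *ᵥ x k)))
    (α β γ : ℝ) (hα : 0 < α) (hβ : 0 < β) (hγ : 0 < γ)
    (hαb : ∀ k : ℕ, sigmaMaxSq (subCols A (J k)) ≤ α)
    (hβb : ∀ k : ℕ, β ≤ frob2 (subCols A (J k)))
    (hγb : ∀ k : ℕ, frob2 A - frob2 (subCols A (J k)) ≤ γ) :
    ∀ k : ℕ, 1 ≤ k →
      norm2 (A *ᵥ (x k - xstar)) ≤
        (1 - β / α * (θ * frob2 A / γ + (1 - θ)) * (sigmaMinSq A / frob2 A)) ^ (k - 1) *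
          ((1 - frob2 (subCols A (J 0)) / sigmaMaxSq (subCols A (J 0)) *
              (sigmaMinSq A / frob2 A)) *
            norm2 (A *ᵥ (x 0 - xstar))) := by
  haveI hne : Nonempty (Fin n) := by
    rcases Nat.eq_zero_or_pos n with h0 | h0
    · subst h0; exact absurd (funext fun j => j.elim0) (hres 0)
    · exact Fin.pos_iff_nonempty.mp h0
  have hFpos : 0 < frob2 A := by
    rw [frob2_eq_sum_col2]
    exact Finset.sum_pos (fun j _ => col2_pos A hA j) Finset.univ_nonempty
  have hsmin : 0 ≤ sigmaMinSq A := sigmaMinSq_nonneg A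
  have hrw : ∀ k, Aᵀ *ᵥ (b - A *ᵥ x k) = - (Aᵀ *ᵥ (A *ᵥ (x k - xstar))) := by
    intro k
    rw [res_decomp A b xstar (x k), Matrix.mulVec_sub, res_star A b xstar hstar, zero_sub]
  have hEpos : ∀ k, 0 < norm2 (A *ᵥ (x k - xstar)) := by
    intro k
    refine norm2_pos' fun h => hres k ?_
    rw [hrw k, h, Matrix.mulVec_zero, neg_zero]
  have hNpos : ∀ k, 0 < norm2 (Aᵀ *ᵥ (b - A *ᵥ x k)) := fun k => norm2_pos' (hres k)
  have hNlow : ∀ k, sigmaMinSq A * norm2 (A *ᵥ (x k - xstar))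
      ≤ norm2 (Aᵀ *ᵥ (b - A *ᵥ x k)) := by
    intro k
    rw [hrw k, norm2_neg, Matrix.mulVec_mulVec]
    have h2 := sigmaMin_quad_le_norm2_G A (x k - xstar)
    rwa [dot_G] at h2
  have hJbpos : ∀ k, 0 < frob2 (subCols A (J k)) := fun k => lt_of_lt_of_le hβ (hβb k)
  have hJne : ∀ k, (J k).Nonempty := by
    intro k
    rcases Finset.eq_empty_or_nonempty (J k) with h | h
    · exfalso
      have h1 := hJbpos k
      rw [h, frob2_subCols] at h1
      simp at h1
    · exact h
  have hsmaxpos : ∀ k, 0 < sigmaMaxSq (subCols A (J k)) := by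
    intro k
    obtain ⟨j0, hj0⟩ := hJne k
    have h1 := quad_le_sigmaMax (subCols A (J k)) (Pi.single ⟨j0, hj0⟩ 1)
    rw [dot_G] at h1
    have h3 : norm2 (subCols A (J k) *ᵥ Pi.single ⟨j0, hj0⟩ (1:ℝ)) = col2 A j0 := by
      rw [Matrix.mulVec_single]
      simp only [MulOpposite.op_one, one_smul]
      rfl
    have h4 : norm2 (Pi.single (M := fun _ : {j // j ∈ J k} => ℝ) ⟨j0, hj0⟩ (1:ℝ)) = 1 := by
      rw [norm2]
      rw [Finset.sum_eq_single ⟨j0, hj0⟩]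
      · simp
      · intro i _ hi; simp [Pi.single_apply, hi]
      · intro h; exact absurd (Finset.mem_univ _) h
    rw [h3, h4, mul_one] at h1
    exact lt_of_lt_of_le (col2_pos A hA j0) h1
  have hstep : ∀ k, norm2 (A *ᵥ (x (k+1) - xstar))
      = norm2 (A *ᵥ (x k - xstar))
        - ((subCols A (J k))ᵀ *ᵥ (A *ᵥ (x k - xstar))) ⬝ᵥ
            (((subCols A (J k))ᵀ * subCols A (J k))⁻¹ *ᵥ
              ((subCols A (J k))ᵀ *ᵥ (A *ᵥ (x k - xstar)))) := by
    intro k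
    rw [hiter k]
    exact energy_step A b xstar hA hstar (J k) (x k)
  have hDlow : ∀ k,
      eps A (b - A *ᵥ x k) θ * norm2 (Aᵀ *ᵥ (b - A *ᵥ x k)) * frob2 (subCols A (J k))
        ≤ sigmaMaxSq (subCols A (J k)) *
          (((subCols A (J k))ᵀ *ᵥ (A *ᵥ (x k - xstar))) ⬝ᵥ
            (((subCols A (J k))ᵀ * subCols A (J k))⁻¹ *ᵥ
              ((subCols A (J k))ᵀ *ᵥ (A *ᵥ (x k - xstar))))) := by
    intro k
    have hq := norm2_le_sigmaMax_invQuad (subCols A (J k)) (det_unit A (J k) hA)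
      ((subCols A (J k))ᵀ *ᵥ (A *ᵥ (x k - xstar)))
    refine le_trans ?_ hq
    have hqr := Bt_res A b xstar hstar (J k) (x k)
    have hnq : norm2 ((subCols A (J k))ᵀ *ᵥ (A *ᵥ (x k - xstar)))
        = ∑ j ∈ J k, ((Aᵀ *ᵥ (b - A *ᵥ x k)) j) ^ 2 := by
      rw [← norm2_neg, ← hqr, norm2,
        ← Finset.sum_coe_sort (J k) (fun j => ((Aᵀ *ᵥ (b - A *ᵥ x k)) j) ^ 2)]
      exact Finset.sum_congr rfl fun j _ => by rw [subCols_transpose_mulVec]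
    rw [hnq, hJ k]
    exact greedy_sum A (b - A *ᵥ x k) θ
  have hepsNF : ∀ k, eps A (b - A *ᵥ x k) θ * norm2 (Aᵀ *ᵥ (b - A *ᵥ x k)) * frob2 A
      = θ * maxRatio A (b - A *ᵥ x k) * frob2 A
        + (1 - θ) * norm2 (Aᵀ *ᵥ (b - A *ᵥ x k)) := by
    intro k
    have hN0 : norm2 (Aᵀ *ᵥ (b - A *ᵥ x k)) ≠ 0 := (hNpos k).ne'
    have hF0 : frob2 A ≠ 0 := hFpos.ne'
    rw [eps]
    field_simp
  have hmaxRpos : ∀ k, 0 < maxRatio A (b - A *ᵥ x k) := by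
    intro k
    have h1 := norm2_le_maxRatio_frob A hA (b - A *ᵥ x k)
    nlinarith [hNpos k, hFpos]
  have horth : ∀ k, ∀ j ∈ J k, (Aᵀ *ᵥ (b - A *ᵥ x (k+1))) j = 0 := by
    intro k
    rw [hiter k]
    exact res_orth A b hA (J k) (x k)
  have hNgam : ∀ k, norm2 (Aᵀ *ᵥ (b - A *ᵥ x (k+1)))
      ≤ maxRatio A (b - A *ᵥ x (k+1)) * γ := by
    intro k
    have h1 := norm2_le_maxRatio_compl A hA (b - A *ᵥ x (k+1)) (J k) (horth k)
    have h2 := mul_le_mul_of_nonneg_left (hγb k) (hmaxRpos (k+1)).le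
    linarith
  -- eps * N nonnegativity helper  (eN * F ≥ N)
  have hepsNlow : ∀ k, norm2 (Aᵀ *ᵥ (b - A *ᵥ x k))
      ≤ eps A (b - A *ᵥ x k) θ * norm2 (Aᵀ *ᵥ (b - A *ᵥ x k)) * frob2 A := by
    intro k
    rw [hepsNF k]
    have h3 := norm2_le_maxRatio_frob A hA (b - A *ᵥ x k)
    have h4 := mul_le_mul_of_nonneg_left h3 hθ.1
    nlinarith [hNpos k, hθ.2]
  have hepsNpos : ∀ k, 0 ≤ eps A (b - A *ᵥ x k) θ * norm2 (Aᵀ *ᵥ (b - A *ᵥ x k)) := by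
    intro k
    have h1 := hepsNlow k
    nlinarith [hNpos k, hFpos]
  -- base step
  have hbase : norm2 (A *ᵥ (x 1 - xstar)) ≤
      (1 - frob2 (subCols A (J 0)) / sigmaMaxSq (subCols A (J 0)) *
        (sigmaMinSq A / frob2 A)) * norm2 (A *ᵥ (x 0 - xstar)) := by
    have harith := arith (norm2 (A *ᵥ (x 0 - xstar)))
      (((subCols A (J 0))ᵀ *ᵥ (A *ᵥ (x 0 - xstar))) ⬝ᵥ
        (((subCols A (J 0))ᵀ * subCols A (J 0))⁻¹ *ᵥ
          ((subCols A (J 0))ᵀ *ᵥ (A *ᵥ (x 0 - xstar)))))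
      (norm2 (Aᵀ *ᵥ (b - A *ᵥ x 0)))
      (eps A (b - A *ᵥ x 0) θ * norm2 (Aᵀ *ᵥ (b - A *ᵥ x 0)))
      (frob2 (subCols A (J 0))) (sigmaMaxSq (subCols A (J 0))) (sigmaMinSq A)
      (frob2 A) (sigmaMaxSq (subCols A (J 0))) (frob2 (subCols A (J 0))) 1
      (hDlow 0) (by rw [one_mul]; exact hepsNlow 0) (hNlow 0)
      zero_le_one (hsmaxpos 0) le_rfl (hJbpos 0) le_rfl hFpos hsmin
      (hEpos 0).le (hNpos 0).le (hepsNpos 0)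
    rw [mul_one] at harith
    have hexp : (1 - frob2 (subCols A (J 0)) / sigmaMaxSq (subCols A (J 0)) *
          (sigmaMinSq A / frob2 A)) * norm2 (A *ᵥ (x 0 - xstar))
        = norm2 (A *ᵥ (x 0 - xstar))
          - frob2 (subCols A (J 0)) / sigmaMaxSq (subCols A (J 0)) *
              (sigmaMinSq A / frob2 A) * norm2 (A *ᵥ (x 0 - xstar)) := by ring
    rw [hexp]
    linarith [hstep 0, harith]
  -- contraction for k ≥ 1
  have hcontr : ∀ k, norm2 (A *ᵥ (x (k+1+1) - xstar)) ≤
      (1 - β / α * (θ * frob2 A / γ + (1 - θ)) * (sigmaMinSq A / frob2 A)) *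
        norm2 (A *ᵥ (x (k+1) - xstar)) := by
    intro k
    have hcpos : 0 ≤ θ * frob2 A / γ + (1 - θ) :=
      add_nonneg (div_nonneg (mul_nonneg hθ.1 hFpos.le) hγ.le) (by linarith [hθ.2])
    have h2 : (θ * frob2 A / γ + (1 - θ)) * norm2 (Aᵀ *ᵥ (b - A *ᵥ x (k+1)))
        ≤ eps A (b - A *ᵥ x (k+1)) θ * norm2 (Aᵀ *ᵥ (b - A *ᵥ x (k+1))) * frob2 A := by
      rw [hepsNF (k+1)]
      have h5 := hNgam k
      have h6 := mul_le_mul_of_nonneg_left h5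
        (div_nonneg (mul_nonneg hθ.1 hFpos.le) hγ.le)
      have h7 : θ * frob2 A / γ * (maxRatio A (b - A *ᵥ x (k+1)) * γ)
          = θ * maxRatio A (b - A *ᵥ x (k+1)) * frob2 A := by
        field_simp
      rw [h7] at h6
      nlinarith [h6]
    have harith := arith (norm2 (A *ᵥ (x (k+1) - xstar)))
      (((subCols A (J (k+1)))ᵀ *ᵥ (A *ᵥ (x (k+1) - xstar))) ⬝ᵥ
        (((subCols A (J (k+1)))ᵀ * subCols A (J (k+1)))⁻¹ *ᵥ
          ((subCols A (J (k+1)))ᵀ *ᵥ (A *ᵥ (x (k+1) - xstar)))))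
      (norm2 (Aᵀ *ᵥ (b - A *ᵥ x (k+1))))
      (eps A (b - A *ᵥ x (k+1)) θ * norm2 (Aᵀ *ᵥ (b - A *ᵥ x (k+1))))
      (frob2 (subCols A (J (k+1)))) (sigmaMaxSq (subCols A (J (k+1)))) (sigmaMinSq A)
      (frob2 A) α β (θ * frob2 A / γ + (1 - θ))
      (hDlow (k+1)) h2 (hNlow (k+1))
      hcpos (hsmaxpos (k+1)) (hαb (k+1)) hβ (hβb (k+1)) hFpos hsmin
      (hEpos (k+1)).le (hNpos (k+1)).le (hepsNpos (k+1))
    have hexp : (1 - β / α * (θ * frob2 A / γ + (1 - θ)) * (sigmaMinSq A / frob2 A)) *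
          norm2 (A *ᵥ (x (k+1) - xstar))
        = norm2 (A *ᵥ (x (k+1) - xstar))
          - β / α * (θ * frob2 A / γ + (1 - θ)) * (sigmaMinSq A / frob2 A) *
              norm2 (A *ᵥ (x (k+1) - xstar)) := by ring
    rw [hexp]
    linarith [hstep (k+1), harith]
  have hρnn : 0 ≤ 1 - β / α * (θ * frob2 A / γ + (1 - θ)) * (sigmaMinSq A / frob2 A) := by
    by_contra hneg
    push_neg at hneg
    have h1 := hcontr 0
    have h2 := hEpos 2
    have h3 := hEpos 1
    nlinarith
  have main : ∀ k', norm2 (A *ᵥ (x (k'+1) - xstar)) ≤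
      (1 - β / α * (θ * frob2 A / γ + (1 - θ)) * (sigmaMinSq A / frob2 A)) ^ k' *
        ((1 - frob2 (subCols A (J 0)) / sigmaMaxSq (subCols A (J 0)) *
            (sigmaMinSq A / frob2 A)) * norm2 (A *ᵥ (x 0 - xstar))) := by
    intro k'
    induction k' with
    | zero => simpa using hbase
    | succ t ih =>
      calc norm2 (A *ᵥ (x (t+1+1) - xstar))
          ≤ (1 - β / α * (θ * frob2 A / γ + (1 - θ)) * (sigmaMinSq A / frob2 A)) *
              norm2 (A *ᵥ (x (t+1) - xstar)) := hcontr t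
        _ ≤ (1 - β / α * (θ * frob2 A / γ + (1 - θ)) * (sigmaMinSq A / frob2 A)) *
              ((1 - β / α * (θ * frob2 A / γ + (1 - θ)) * (sigmaMinSq A / frob2 A)) ^ t *
                ((1 - frob2 (subCols A (J 0)) / sigmaMaxSq (subCols A (J 0)) *
                    (sigmaMinSq A / frob2 A)) * norm2 (A *ᵥ (x 0 - xstar)))) :=
            mul_le_mul_of_nonneg_left ih hρnn
        _ = (1 - β / α * (θ * frob2 A / γ + (1 - θ)) * (sigmaMinSq A / frob2 A)) ^ (t+1) *
              ((1 - frob2 (subCols A (J 0)) / sigmaMaxSq (subCols A (J 0)) *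
                  (sigmaMinSq A / frob2 A)) * norm2 (A *ᵥ (x 0 - xstar))) := by ring
  intro k hk
  obtain ⟨k', rfl⟩ : ∃ k', k = k' + 1 := ⟨k - 1, by omega⟩
  simpa [Nat.add_sub_cancel] using main k'
end
end

section
/- Let J ⊆ {1,…,n} be a nonempty index set, let ω ∈ R, let x ∈ R^n, and set x' = x + ω·Ĩ_J Ã_Jᵀ (b − Ax). Then ‖x' − x⋆‖²_{AᵀA} ≤ ‖x − x⋆‖²_{AᵀA} − (2ω − ω²·σ_max(Ã_J)²) · ‖Ã_Jᵀ A(x − x⋆)‖₂². -/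
noncomputable section
open Matrix

lemma norm2_sub_smul {ι : Type*} [Fintype ι] (v w : ι → ℝ) (ω : ℝ) :
    norm2 (v - ω • w) = norm2 v - 2 * ω * (v ⬝ᵥ w) + ω ^ 2 * norm2 w := by
  simp only [norm2, dotProduct, Pi.sub_apply, Pi.smul_apply, smul_eq_mul]
  rw [Finset.mul_sum, Finset.mul_sum, ← Finset.sum_sub_distrib, ← Finset.sum_add_distrib]
  exact Finset.sum_congr rfl fun i _ => by ring

lemma rayleigh {ι κ : Type*} [Fintype ι] [Fintype κ] [DecidableEq κ] [Nonempty κ]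
    (B : Matrix ι κ ℝ) (u : κ → ℝ) :
    norm2 (B *ᵥ u) ≤ sigmaMaxSq B * norm2 u := by
  classical
  set hM := Matrix.isHermitian_conjTranspose_mul_self B with hMdef
  set U : Matrix κ κ ℝ := (hM.eigenvectorUnitary : Matrix κ κ ℝ) with hU
  have hUU : U * star U = 1 := (Matrix.mem_unitaryGroup_iff).mp hM.eigenvectorUnitary.2
  have hsU : star U = Uᵀ := by
    ext i j; simp [Matrix.star_apply]
  set c : κ → ℝ := Uᵀ *ᵥ u with hc
  have hnorm_c : norm2 c = norm2 u := by
    have : c ⬝ᵥ c = u ⬝ᵥ u := by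
      rw [hc]
      nth_rewrite 1 [Matrix.mulVec_transpose]
      rw [Matrix.dotProduct_mulVec, Matrix.vecMul_vecMul]
      have hUUt : U * Uᵀ = 1 := by rw [← hsU]; exact hUU
      rw [hUUt, Matrix.vecMul_one]
    rw [norm2_eq_dot, norm2_eq_dot, this]
  have hquad : norm2 (B *ᵥ u) = ∑ i, hM.eigenvalues i * (c i) ^ 2 := by
    have h0 : u ⬝ᵥ ((Bᵀ * B) *ᵥ u) = norm2 (B *ᵥ u) := by
      rw [← Matrix.mulVec_mulVec, Matrix.dotProduct_mulVec, Matrix.vecMul_transpose,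
        norm2_eq_dot]
    have hd : (Bᵀ * B) = U * Matrix.diagonal hM.eigenvalues * star U := by
      have hs := hM.spectral_theorem
      rw [Unitary.conjStarAlgAut_apply] at hs
      rw [← Matrix.conjTranspose_eq_transpose_of_trivial]
      refine hs.trans ?_
      simp [hU]
    rw [← h0, hd, hsU]
    rw [← Matrix.mulVec_mulVec, ← Matrix.mulVec_mulVec, Matrix.dotProduct_mulVec]
    have hvU : u ᵥ* U = c := by
      rw [hc, Matrix.mulVec_transpose]
    rw [hvU, ← hc]
    simp only [dotProduct]
    exact Finset.sum_congr rfl fun i _ => by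
      rw [Matrix.mulVec_diagonal]; ring
  have hbdd : BddAbove (Set.range hM.eigenvalues) := (Set.finite_range _).bddAbove
  have hle : ∀ i, hM.eigenvalues i ≤ sigmaMaxSq B := fun i =>
    le_csSup hbdd (Set.mem_range_self i)
  calc norm2 (B *ᵥ u) = ∑ i, hM.eigenvalues i * (c i) ^ 2 := hquad
    _ ≤ ∑ i, sigmaMaxSq B * (c i) ^ 2 := by
        refine Finset.sum_le_sum fun i _ => ?_
        exact mul_le_mul_of_nonneg_right (hle i) (sq_nonneg _)
    _ = sigmaMaxSq B * norm2 c := by rw [norm2, Finset.mul_sum]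
    _ = sigmaMaxSq B * norm2 u := by rw [hnorm_c]

lemma mul_tildeI {m n : ℕ} (A : Matrix (Fin m) (Fin n) ℝ) (J : Finset (Fin n)) :
    A * tildeI A J = tildeA A J := by
  ext i j
  simp only [Matrix.mul_apply, tildeI, tildeA, Matrix.of_apply, mul_div_assoc',
    ← Finset.sum_div, mul_ite, mul_one, mul_zero]
  congr 1
  simp

/-- one-step bound for the pseudoinverse-free block update
`x' = x + ω Ĩ_J Ã_Jᵀ (b − Ax)`:
`‖x' − x⋆‖²_{AᵀA} ≤ ‖x − x⋆‖²_{AᵀA} − (2ω − ω²σ_max(Ã_J)²)‖Ã_Jᵀ A(x − x⋆)‖₂²`. -/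
theorem stmt14 {m n : ℕ} (A : Matrix (Fin m) (Fin n) ℝ) (hA : FullColRank A)
    (b : Fin m → ℝ) (xstar : Fin n → ℝ) (hstar : (Aᵀ * A) *ᵥ xstar = Aᵀ *ᵥ b)
    (J : Finset (Fin n)) (hJ : J.Nonempty) (ω : ℝ) (x x' : Fin n → ℝ)
    (hx' : x' = x + ω • (tildeI A J *ᵥ ((tildeA A J)ᵀ *ᵥ (b - A *ᵥ x)))) :
    norm2 (A *ᵥ (x' - xstar)) ≤
      norm2 (A *ᵥ (x - xstar)) -
        (2 * ω - ω ^ 2 * sigmaMaxSq (tildeA A J)) *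
          norm2 ((tildeA A J)ᵀ *ᵥ (A *ᵥ (x - xstar))) := by
  classical
  have hNE : Nonempty {j // j ∈ J} := hJ.to_subtype
  have hAI := mul_tildeI A J
  have hAtr : Aᵀ *ᵥ (b - A *ᵥ x) = -(Aᵀ *ᵥ (A *ᵥ (x - xstar))) := by
    have hb : Aᵀ *ᵥ b = Aᵀ *ᵥ (A *ᵥ xstar) := by rw [Matrix.mulVec_mulVec, hstar]
    rw [Matrix.mulVec_sub, hb, Matrix.mulVec_sub, Matrix.mulVec_sub, neg_sub]
  have htAtr : (tildeA A J)ᵀ *ᵥ (b - A *ᵥ x) =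
      -((tildeA A J)ᵀ *ᵥ (A *ᵥ (x - xstar))) := by
    rw [← hAI, Matrix.transpose_mul, ← Matrix.mulVec_mulVec, hAtr, Matrix.mulVec_neg,
      Matrix.mulVec_mulVec]
  have h2 : A *ᵥ (tildeI A J *ᵥ ((tildeA A J)ᵀ *ᵥ (b - A *ᵥ x))) =
      -(tildeA A J *ᵥ ((tildeA A J)ᵀ *ᵥ (A *ᵥ (x - xstar)))) := by
    rw [Matrix.mulVec_mulVec, hAI, htAtr, Matrix.mulVec_neg]
  have hx'' : x' - xstar =
      (x - xstar) + ω • (tildeI A J *ᵥ ((tildeA A J)ᵀ *ᵥ (b - A *ᵥ x))) := by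
    rw [hx']; ext i; simp; ring
  have hkey : A *ᵥ (x' - xstar) = A *ᵥ (x - xstar) -
      ω • (tildeA A J *ᵥ ((tildeA A J)ᵀ *ᵥ (A *ᵥ (x - xstar)))) := by
    rw [hx'', Matrix.mulVec_add, Matrix.mulVec_smul, h2, smul_neg, ← sub_eq_add_neg]
  have hvw : (A *ᵥ (x - xstar)) ⬝ᵥ (tildeA A J *ᵥ ((tildeA A J)ᵀ *ᵥ (A *ᵥ (x - xstar)))) =
      norm2 ((tildeA A J)ᵀ *ᵥ (A *ᵥ (x - xstar))) := by
    rw [Matrix.dotProduct_mulVec, norm2_eq_dot]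
    congr 1
    exact (Matrix.mulVec_transpose _ _).symm
  rw [hkey, norm2_sub_smul, hvw]
  have hray := rayleigh (tildeA A J) ((tildeA A J)ᵀ *ᵥ (A *ᵥ (x - xstar)))
  nlinarith [mul_le_mul_of_nonneg_left hray (sq_nonneg ω)]
end
end
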